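/- Let Ã : [a,b] → ℂ^{N×N} be continuous. Then U(t) := I + ∑_{n=1}^∞ (Θ ★ A^{★n})(t,a), where A(t,s) = Ã(t)Θ(t−s), converges and is the unique solution of U′(t) = Ã(t)U(t) with U(a) = I (i.e., the Θ ★ R^★(A) representation of the time-ordered exponential is valid). -/

import Mathlib

open MeasureTheory Set

/-- Heaviside function: `Θ x = 1` if `x ≥ 0`, else `0`. -/
noncomputable def Heaviside (x : ℝ) : ℝ := if 0 ≤ x then 1 else 0

/-- Operators on `ℂ^N`, formalizing `N × N` complex matrices. -/
abbrev MatN (N : ℕ) := (Fin N → ℂ) →L[ℂ] (Fin N → ℂ)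

/-- The matrix `★`-product of two matrix kernels on `[a,b]²`. -/
noncomputable def mStarProd {N : ℕ} (a b : ℝ) (G H : ℝ → ℝ → MatN N) : ℝ → ℝ → MatN N :=
  fun t s => ∫ τ in a..b, G t τ * H τ s

/-- `mStarPow a b A n` is the `(n+1)`-st `★`-power `A^{★(n+1)}`. -/
noncomputable def mStarPow {N : ℕ} (a b : ℝ) (A : ℝ → ℝ → MatN N) : ℕ → ℝ → ℝ → MatN N
  | 0 => A
  | n + 1 => mStarProd a b A (mStarPow a b A n)

/-- The Heaviside kernel times the identity matrix. -/
noncomputable def thetaI (N : ℕ) : ℝ → ℝ → MatN N := fun t s => Heaviside (t - s) • 1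

/-! ### Auxiliary development -/

noncomputable def picQ {N : ℕ} (a : ℝ) (At : ℝ → MatN N) : ℕ → ℝ → MatN N
  | 0 => At
  | n + 1 => fun σ => At σ * ∫ u in a..σ, picQ a At n u

noncomputable def picP {N : ℕ} (a : ℝ) (At : ℝ → MatN N) (n : ℕ) (t : ℝ) : MatN N :=
  ∫ σ in a..t, picQ a At n σ

lemma heaviside_smul {N : ℕ} (x : ℝ) (M : MatN N) :
    Heaviside x • M = if 0 ≤ x then M else 0 := by
  by_cases h : 0 ≤ x
  · simp [Heaviside, h]
  · simp only [Heaviside, if_neg h]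
    exact zero_smul ℝ M

lemma cutoff_integral {N : ℕ} {a b t : ℝ} (ht : t ∈ Icc a b) {g : ℝ → MatN N}
    (hg : ContinuousOn g (Icc a b)) :
    (∫ τ in a..b, Heaviside (t - τ) • g τ) = ∫ τ in a..t, g τ := by
  have hab : a ≤ b := ht.1.trans ht.2
  have hkey : ∀ τ, Heaviside (t - τ) • g τ = (Iic t).indicator g τ := by
    intro τ
    by_cases h : τ ≤ t
    · simp [Heaviside, sub_nonneg.2 h, indicator_of_mem (mem_Iic.2 h)]
    · have h0 : ¬ (0 : ℝ) ≤ t - τ := by simpa [sub_nonneg] using h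
      rw [indicator_of_notMem (fun hc => h (mem_Iic.1 hc))]
      simp only [Heaviside, if_neg h0]
      exact zero_smul ℝ (g τ)
  have hgi : IntervalIntegrable g volume a b :=
    (hg.mono (by rw [uIcc_of_le hab] : uIcc a b ⊆ Icc a b)).intervalIntegrable
  have hind : IntervalIntegrable ((Iic t).indicator g) volume a b := by
    constructor
    · exact (hgi.1.indicator measurableSet_Iic)
    · exact (hgi.2.indicator measurableSet_Iic)
  simp_rw [hkey]
  have hsplit := intervalIntegral.integral_add_adjacent_intervals
    (hind.mono_set (by rw [uIcc_of_le ht.1, uIcc_of_le hab]; exact Icc_subset_Icc le_rfl ht.2))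
    (hind.mono_set (by rw [uIcc_of_le ht.2, uIcc_of_le hab]; exact Icc_subset_Icc ht.1 le_rfl))
  rw [← hsplit]
  have h1 : (∫ τ in a..t, (Iic t).indicator g τ) = ∫ τ in a..t, g τ := by
    apply intervalIntegral.integral_congr
    intro τ hτ
    rw [uIcc_of_le ht.1] at hτ
    exact indicator_of_mem (mem_Iic.2 hτ.2) g
  have h2 : (∫ τ in t..b, (Iic t).indicator g τ) = 0 := by
    rw [← intervalIntegral.integral_zero (a := t) (b := b) (E := MatN _)]
    apply intervalIntegral.integral_congr_ae
    filter_upwards with τ hτ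
    rw [uIoc_of_le ht.2] at hτ
    exact indicator_of_notMem (fun hc => absurd hτ.1 (not_lt.2 (mem_Iic.1 hc))) g
  rw [h1, h2, add_zero]

lemma integral_mul_left_comm {N : ℕ} {a c : ℝ} (M : MatN N) {g : ℝ → MatN N}
    (hg : IntervalIntegrable g volume a c) :
    (∫ τ in a..c, M * g τ) = M * ∫ τ in a..c, g τ :=
  (ContinuousLinearMap.compL ℂ (Fin N → ℂ) (Fin N → ℂ) (Fin N → ℂ) M).intervalIntegral_comp_comm hg

lemma picQ_contOn {N : ℕ} {a b : ℝ} (hab : a ≤ b) {At : ℝ → MatN N}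
    (hcont : ContinuousOn At (Icc a b)) (n : ℕ) :
    ContinuousOn (picQ a At n) (Icc a b) := by
  induction n with
  | zero => exact hcont
  | succ n ih =>
    have hint : IntegrableOn (picQ a At n) (uIcc a b) volume := by
      rw [uIcc_of_le hab]; exact ih.integrableOn_compact isCompact_Icc
    have h1 : ContinuousOn (fun σ => ∫ u in a..σ, picQ a At n u) (Icc a b) := by
      have := intervalIntegral.continuousOn_primitive_interval (μ := volume) hint
      rwa [uIcc_of_le hab] at this
    exact hcont.mul h1

lemma picP_contOn {N : ℕ} {a b : ℝ} (hab : a ≤ b) {At : ℝ → MatN N}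
    (hcont : ContinuousOn At (Icc a b)) (n : ℕ) :
    ContinuousOn (picP a At n) (Icc a b) := by
  have hint : IntegrableOn (picQ a At n) (uIcc a b) volume := by
    rw [uIcc_of_le hab]
    exact (picQ_contOn hab hcont n).integrableOn_compact isCompact_Icc
  have := intervalIntegral.continuousOn_primitive_interval (μ := volume) hint
  rwa [uIcc_of_le hab] at this

lemma prim_bound {N : ℕ} {a b : ℝ} {g : ℝ → MatN N} {K : ℝ} (hK : 0 ≤ K) (n : ℕ)
    (hg : ∀ σ ∈ Icc a b, ‖g σ‖ ≤ K * (σ - a) ^ n / n.factorial)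
    (hgc : ContinuousOn g (Icc a b)) :
    ∀ t ∈ Icc a b, ‖∫ σ in a..t, g σ‖ ≤ K * (t - a) ^ (n + 1) / (n + 1).factorial := by
  intro t ht
  have hab : a ≤ b := ht.1.trans ht.2
  have hbound : IntervalIntegrable (fun σ => K * (σ - a) ^ n / (n.factorial : ℝ)) volume a t :=
    (Continuous.intervalIntegrable (by fun_prop) a t)
  have h1 : ‖∫ σ in a..t, g σ‖ ≤ |∫ σ in a..t, K * (σ - a) ^ n / (n.factorial : ℝ)| := by
    apply intervalIntegral.norm_integral_le_abs_of_norm_le _ hbound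
    rw [uIoc_of_le ht.1]
    filter_upwards [ae_restrict_mem measurableSet_Ioc] with σ hσ
    exact hg σ ⟨hσ.1.le, hσ.2.trans ht.2⟩
  have h2 : (∫ σ in a..t, (σ - a) ^ n) = (t - a) ^ (n + 1) / (n + 1) := by
    have h3 := intervalIntegral.integral_comp_sub_right (a := a) (b := t)
      (fun x => x ^ n) a
    rw [h3, sub_self, integral_pow, zero_pow (by omega), sub_zero]
  have h4 : (∫ σ in a..t, K * (σ - a) ^ n / (n.factorial : ℝ))
      = K * (t - a) ^ (n + 1) / (n + 1).factorial := by
    have h5 : (∫ σ in a..t, K * (σ - a) ^ n / (n.factorial : ℝ))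
        = (∫ σ in a..t, (σ - a) ^ n) * (K / n.factorial) := by
      rw [← intervalIntegral.integral_mul_const]
      congr 1; ext σ; ring
    rw [h5, h2, Nat.factorial_succ]
    push_cast
    have h6 : ((n.factorial : ℝ)) ≠ 0 := Nat.cast_ne_zero.2 n.factorial_ne_zero
    have h7 : ((n : ℝ) + 1) ≠ 0 := by positivity
    field_simp
  rw [h4] at h1
  refine h1.trans (le_of_eq (abs_of_nonneg ?_))
  have h5 : (0 : ℝ) ≤ t - a := sub_nonneg.2 ht.1
  positivity

lemma picQ_bound {N : ℕ} {a b : ℝ} (hab : a ≤ b) {At : ℝ → MatN N}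
    (hcont : ContinuousOn At (Icc a b)) {C : ℝ} (hC0 : 0 ≤ C)
    (hC : ∀ t ∈ Icc a b, ‖At t‖ ≤ C) (n : ℕ) :
    ∀ τ ∈ Icc a b, ‖picQ a At n τ‖ ≤ C ^ (n + 1) * (τ - a) ^ n / n.factorial := by
  induction n with
  | zero => intro τ hτ; simpa [picQ] using hC τ hτ
  | succ n ih =>
    intro τ hτ
    have hInt := prim_bound (K := C ^ (n + 1)) (by positivity) n ih
      (picQ_contOn hab hcont n) τ hτ
    calc ‖picQ a At (n + 1) τ‖ = ‖At τ * ∫ u in a..τ, picQ a At n u‖ := rfl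
      _ ≤ ‖At τ‖ * ‖∫ u in a..τ, picQ a At n u‖ := norm_mul_le _ _
      _ ≤ C * (C ^ (n + 1) * (τ - a) ^ (n + 1) / (n + 1).factorial) := by
          apply mul_le_mul (hC τ hτ) hInt (norm_nonneg _) hC0
      _ = C ^ (n + 2) * (τ - a) ^ (n + 1) / (n + 1).factorial := by ring

lemma real_smul_mul {N : ℕ} (r : ℝ) (x y : MatN N) : (r • x) * y = r • (x * y) :=
  ContinuousLinearMap.smul_comp r x y

lemma mStarPow_eq {N : ℕ} {a b : ℝ} (hab : a ≤ b) {At : ℝ → MatN N}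
    (hcont : ContinuousOn At (Icc a b)) {A : ℝ → ℝ → MatN N}
    (hA : ∀ t s, A t s = Heaviside (t - s) • At t) :
    ∀ n, ∀ τ ∈ Icc a b, mStarPow a b A n τ a = picQ a At n τ := by
  intro n
  induction n with
  | zero =>
    intro τ hτ
    show A τ a = At τ
    rw [hA, heaviside_smul, if_pos (sub_nonneg.2 hτ.1)]
  | succ n ih =>
    intro τ hτ
    show (∫ σ in a..b, A τ σ * mStarPow a b A n σ a) = picQ a At (n + 1) τ
    have hstep1 : (∫ σ in a..b, A τ σ * mStarPow a b A n σ a)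
        = ∫ σ in a..b, Heaviside (τ - σ) • (At τ * picQ a At n σ) := by
      apply intervalIntegral.integral_congr
      intro σ hσ
      rw [uIcc_of_le hab] at hσ
      show A τ σ * mStarPow a b A n σ a = Heaviside (τ - σ) • (At τ * picQ a At n σ)
      rw [ih σ hσ, hA, real_smul_mul]
    have hstep2 := cutoff_integral hτ
      (g := fun σ => At τ * picQ a At n σ)
      (continuousOn_const.mul (picQ_contOn hab hcont n))
    have hstep3 : (∫ σ in a..τ, At τ * picQ a At n σ)
        = At τ * ∫ σ in a..τ, picQ a At n σ := by
      apply integral_mul_left_comm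
      exact ((picQ_contOn hab hcont n).mono
        (by rw [uIcc_of_le hτ.1]; exact Icc_subset_Icc le_rfl hτ.2)).intervalIntegrable
    rw [hstep1, hstep2, hstep3]
    rfl

lemma mStarProd_theta_eq {N : ℕ} {a b : ℝ} (hab : a ≤ b) {At : ℝ → MatN N}
    (hcont : ContinuousOn At (Icc a b)) {A : ℝ → ℝ → MatN N}
    (hA : ∀ t s, A t s = Heaviside (t - s) • At t) (n : ℕ) :
    ∀ t ∈ Icc a b, mStarProd a b (thetaI N) (mStarPow a b A n) t a = picP a At n t := by
  intro t ht
  show (∫ τ in a..b, thetaI N t τ * mStarPow a b A n τ a) = picP a At n t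
  have hstep1 : (∫ τ in a..b, thetaI N t τ * mStarPow a b A n τ a)
      = ∫ τ in a..b, Heaviside (t - τ) • picQ a At n τ := by
    apply intervalIntegral.integral_congr
    intro τ hτ
    rw [uIcc_of_le hab] at hτ
    show thetaI N t τ * mStarPow a b A n τ a = Heaviside (t - τ) • picQ a At n τ
    rw [mStarPow_eq hab hcont hA n τ hτ, thetaI, real_smul_mul, one_mul]
  rw [hstep1, cutoff_integral ht (picQ_contOn hab hcont n)]
  rfl

/-- For continuous `Ã`, the Peano–Baker/Dyson series
`U(t) = I + ∑_{n≥1} (Θ ★ A^{★n})(t,a)`, with `A(t,s) = Ã(t)Θ(t-s)`, converges and is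
the unique solution of `U' = Ã U`, `U(a) = I` (here `mStarPow a b A n = A^{★(n+1)}`). -/
theorem dyson_series_solves_ode {N : ℕ} (a b : ℝ) (hab : a ≤ b)
    (At : ℝ → MatN N) (hcont : ContinuousOn At (Icc a b))
    (A : ℝ → ℝ → MatN N) (hA : ∀ t s, A t s = Heaviside (t - s) • At t)
    (U : ℝ → MatN N)
    (hU : ∀ t, U t = 1 + ∑' n : ℕ, mStarProd a b (thetaI N) (mStarPow a b A n) t a) :
    (∀ t ∈ Icc a b,
        Summable fun n : ℕ => mStarProd a b (thetaI N) (mStarPow a b A n) t a) ∧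
    U a = 1 ∧
    (∀ t ∈ Icc a b, HasDerivWithinAt U (At t * U t) (Icc a b) t) ∧
    (∀ V : ℝ → MatN N, V a = 1 →
      (∀ t ∈ Icc a b, HasDerivWithinAt V (At t * V t) (Icc a b) t) →
      ∀ t ∈ Icc a b, V t = U t) := by
  classical
  obtain ⟨C₀, hC₀⟩ := isCompact_Icc.exists_bound_of_continuousOn hcont
  set C : ℝ := max C₀ 0 with hCdef
  have hC0 : 0 ≤ C := le_max_right _ _
  have hC : ∀ t ∈ Icc a b, ‖At t‖ ≤ C := fun t ht => (hC₀ t ht).trans (le_max_left _ _)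
  have hQc := picQ_contOn hab hcont
  have hPc := picP_contOn hab hcont
  have hQb := picQ_bound hab hcont hC0 hC
  have hsp := mStarProd_theta_eq hab hcont hA
  have hamem : a ∈ Icc a b := ⟨le_refl a, hab⟩
  -- bounds on the Picard iterates
  have hPb : ∀ n, ∀ t ∈ Icc a b,
      ‖picP a At n t‖ ≤ C ^ (n + 1) * (t - a) ^ (n + 1) / (n + 1).factorial :=
    fun n => prim_bound (by positivity) n (hQb n) (hQc n)
  have hPb' : ∀ n, ∀ t ∈ Icc a b,
      ‖picP a At n t‖ ≤ (C * (b - a)) ^ (n + 1) / ((n + 1).factorial : ℝ) := by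
    intro n t ht
    refine (hPb n t ht).trans ?_
    rw [mul_pow]
    have h1 : (0:ℝ) ≤ t - a := sub_nonneg.2 ht.1
    have h2 : t - a ≤ b - a := sub_le_sub_right ht.2 a
    gcongr
  have hu : Summable (fun n : ℕ => (C * (b - a)) ^ (n + 1) / ((n + 1).factorial : ℝ)) := by
    have h := (Real.summable_pow_div_factorial (C * (b - a))).comp_injective
      Nat.succ_injective
    exact h.congr fun n => rfl
  have hPsum : ∀ t ∈ Icc a b, Summable (fun n => picP a At n t) := fun t ht =>
    Summable.of_norm_bounded hu (fun n => hPb' n t ht)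
  -- identification of U with the Picard series
  set W : ℝ → MatN N := fun t => 1 + ∑' n, picP a At n t with hWdef
  have hUW : ∀ t ∈ Icc a b, U t = W t := by
    intro t ht
    rw [hU t]
    exact congrArg (1 + ·) (tsum_congr fun n => hsp n t ht)
  have hWcont : ContinuousOn W (Icc a b) :=
    continuousOn_const.add (continuousOn_tsum hPc hu (fun n t ht => hPb' n t ht))
  have hUcont : ContinuousOn U (Icc a b) := hWcont.congr (fun t ht => hUW t ht)
  -- summability of the original series
  have goal1 : ∀ t ∈ Icc a b,
      Summable fun n : ℕ => mStarProd a b (thetaI N) (mStarPow a b A n) t a :=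
    fun t ht => (hPsum t ht).congr (fun n => (hsp n t ht).symm)
  -- initial value
  have goal2 : U a = 1 := by
    rw [hU a]
    have hz : ∀ n : ℕ, mStarProd a b (thetaI N) (mStarPow a b A n) a a = 0 := by
      intro n
      rw [hsp n a hamem]
      exact intervalIntegral.integral_same
    rw [tsum_congr hz, tsum_zero, add_zero]
  -- the integral equation
  have hbound_cont : ContinuousOn
      (fun σ => ∑' n : ℕ, C ^ (n + 1) * (σ - a) ^ n / (n.factorial : ℝ)) (Icc a b) := by
    apply continuousOn_tsum (u := fun n => C ^ (n + 1) * (b - a) ^ n / (n.factorial : ℝ))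
    · intro n
      exact Continuous.continuousOn (by fun_prop)
    · have h := (Real.summable_pow_div_factorial (C * (b - a))).mul_left C
      exact h.congr fun n => by rw [mul_pow]; ring
    · intro n σ hσ
      have h1 : (0:ℝ) ≤ σ - a := sub_nonneg.2 hσ.1
      have h2 : σ - a ≤ b - a := sub_le_sub_right hσ.2 a
      rw [Real.norm_of_nonneg (by positivity)]
      gcongr
  have hkeyInt : ∀ t ∈ Icc a b, (∑' n, picP a At n t) = ∫ σ in a..t, At σ * U σ := by
    intro t ht
    have hHS : HasSum (fun n => ∫ σ in a..t, picQ a At n σ)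
        (∫ σ in a..t, At σ * U σ) := by
      apply intervalIntegral.hasSum_integral_of_dominated_convergence
        (bound := fun n σ => C ^ (n + 1) * (σ - a) ^ n / (n.factorial : ℝ))
      · intro n
        rw [uIoc_of_le ht.1]
        exact ((hQc n).mono (fun σ hσ => ⟨hσ.1.le, hσ.2.trans ht.2⟩)).aestronglyMeasurable
          measurableSet_Ioc
      · intro n
        filter_upwards with σ hσ
        rw [uIoc_of_le ht.1] at hσ
        exact hQb n σ ⟨hσ.1.le, hσ.2.trans ht.2⟩
      · filter_upwards with σ hσ
        have h := (Real.summable_pow_div_factorial (C * (σ - a))).mul_left C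
        exact h.congr fun n => by rw [mul_pow]; ring
      · exact (hbound_cont.mono
          (by rw [uIcc_of_le ht.1]; exact Icc_subset_Icc le_rfl ht.2)).intervalIntegrable
      · filter_upwards with σ hσ
        rw [uIoc_of_le ht.1] at hσ
        have hσ' : σ ∈ Icc a b := ⟨hσ.1.le, hσ.2.trans ht.2⟩
        have h1 : HasSum (fun n => picP a At n σ) (∑' n, picP a At n σ) :=
          (hPsum σ hσ').hasSum
        have h3 : HasSum (fun n => picQ a At (n + 1) σ)
            (At σ * ∑' n, picP a At n σ) := h1.mul_left (At σ)
        have h4 := (hasSum_nat_add_iff (f := fun n => picQ a At n σ) 1).mp h3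
        have h5 : At σ * ∑' n, picP a At n σ + ∑ i ∈ Finset.range 1, picQ a At i σ
            = At σ * U σ := by
          rw [Finset.sum_range_one, hUW σ hσ']
          show At σ * ∑' n, picP a At n σ + At σ = At σ * (1 + ∑' n, picP a At n σ)
          rw [mul_add, mul_one, add_comm]
        rwa [h5] at h4
    exact hHS.tsum_eq
  have hUie : ∀ t ∈ Icc a b, U t = 1 + ∫ σ in a..t, At σ * U σ := by
    intro t ht
    rw [hUW t ht]
    show 1 + _ = _
    rw [hkeyInt t ht]
  have hgcont : ContinuousOn (fun σ => At σ * U σ) (Icc a b) := hcont.mul hUcont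
  -- the derivative
  have goal3 : ∀ t ∈ Icc a b, HasDerivWithinAt U (At t * U t) (Icc a b) t := by
    intro t ht
    have hFi : IntervalIntegrable (fun σ => At σ * U σ) volume a t := by
      apply ContinuousOn.intervalIntegrable
      apply hgcont.mono
      rw [uIcc_of_le ht.1]
      exact Icc_subset_Icc le_rfl ht.2
    haveI : Fact (t ∈ Icc a b) := ⟨ht⟩
    have hF0 := intervalIntegral.integral_hasDerivWithinAt_right (s := Icc a b) (t := Icc a b) hFi
      ⟨Icc a b, self_mem_nhdsWithin, hgcont.aestronglyMeasurable measurableSet_Icc⟩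
      (hgcont t ht)
    have hF := hF0.const_add (1 : MatN N)
    exact hF.congr (fun y hy => hUie y hy) (hUie t ht)
  refine ⟨goal1, goal2, goal3, ?_⟩
  -- uniqueness
  intro V hVa hV' t ht
  set cl : ℝ → ℝ := fun s => max a (min s b) with hcl
  have hclmem : ∀ s, cl s ∈ Icc a b :=
    fun s => ⟨le_max_left _ _, max_le hab (min_le_right s b)⟩
  set v : ℝ → MatN N → MatN N := fun s x => At (cl s) * x with hv
  have hlip : ∀ s, LipschitzWith C.toNNReal (v s) := by
    intro s
    apply LipschitzWith.of_dist_le_mul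
    intro x y
    rw [dist_eq_norm, dist_eq_norm, ← mul_sub]
    calc ‖At (cl s) * (x - y)‖ ≤ ‖At (cl s)‖ * ‖x - y‖ := norm_mul_le _ _
      _ ≤ C.toNNReal * ‖x - y‖ := by
          apply mul_le_mul_of_nonneg_right _ (norm_nonneg _)
          rw [Real.coe_toNNReal C hC0]
          exact hC _ (hclmem s)
  have hderiv' : ∀ (f : ℝ → MatN N),
      (∀ s ∈ Icc a b, HasDerivWithinAt f (At s * f s) (Icc a b) s) →
      ∀ s ∈ Ico a b, HasDerivWithinAt f (v s (f s)) (Ici s) s := by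
    intro f hf s hs
    have hcls : cl s = s := by
      rw [hcl]
      simp only
      rw [min_eq_left hs.2.le, max_eq_right hs.1]
    have h1 := (hf s ⟨hs.1, hs.2.le⟩).mono (Icc_subset_Icc hs.1 le_rfl)
    have h2 : Icc s b ∈ nhdsWithin s (Ici s) :=
      Icc_mem_nhdsGE_of_mem ⟨le_refl s, hs.2⟩
    have h3 := h1.mono_of_mem_nhdsWithin h2
    rw [hv]
    simp only [hcls]
    exact h3
  have hVcont : ContinuousOn V (Icc a b) :=
    fun s hs => (hV' s hs).continuousWithinAt
  have huniq := ODE_solution_unique hlip hVcont (hderiv' V hV') hUcont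
    (hderiv' U goal3) (by rw [hVa, goal2])
  exact huniq ht
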